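/- Let z : ℝ → ℂ be a C² arc-length-parametrized curve with unit tangent T(s) = z'(s), and let γ̂(s) = √(T(s)̄ ) · (1, z(s)) ∈ ℂ² (a contact lift, defined locally where a continuous square root of the conjugate tangent exists). Then ω_ℂ(γ̂(s), γ̂'(s)) = i for all s, where ω_ℂ is the standard complex symplectic form on ℂ² given by ω_ℂ((u₁,u₂),(v₁,v₂)) = -i(u₁v₂ - u₂v₁) up to the normalization with matrix [[0,-i],[i,0]]; in particular the real part ω = Re(ω_ℂ) satisfies ω(γ̂(s), γ̂'(s)) = 0, so γ̂ is Legendrian for ω. -/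

import Mathlib

/-- The complex symplectic form on ℂ², with matrix [[0,-i],[i,0]] (under the convention
ω_ℂ(u,v) = vᵀ M u, i.e. ω_ℂ(u,v) = i(u₁v₂ - u₂v₁)). -/
noncomputable def omegaC (u v : ℂ × ℂ) : ℂ := Complex.I * (u.1 * v.2 - u.2 * v.1)

/-- The contact lift γ̂(s) = √(conj T(s)) · (1, z(s)) of the plane curve z. -/
noncomputable def gammaHat (z sq : ℝ → ℂ) (s : ℝ) : ℂ × ℂ := (sq s, sq s * z s)

/-- for an arc-length parametrized C² plane curve z with contact lift
γ̂ = √(conj z') · (1, z), one has ω_ℂ(γ̂, γ̂') = i; in particular ω = Re(ω_ℂ) vanishes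
on (γ̂, γ̂'), so γ̂ is Legendrian. -/
theorem stmt19 (z : ℝ → ℂ) (hz : ContDiff ℝ 2 z)
    (hunit : ∀ s : ℝ, ‖deriv z s‖ = 1)
    (sq : ℝ → ℂ) (hsq : Differentiable ℝ sq)
    (hsqT : ∀ s : ℝ, (sq s)^2 = starRingEnd ℂ (deriv z s)) :
    ∀ s : ℝ, omegaC (gammaHat z sq s) (deriv (gammaHat z sq) s) = Complex.I ∧
      (omegaC (gammaHat z sq s) (deriv (gammaHat z sq) s)).re = 0 := by
  intro s
  have hzd : Differentiable ℝ z := hz.differentiable (by norm_num)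
  have h1 : HasDerivAt (gammaHat z sq)
      (deriv sq s, deriv sq s * z s + sq s * deriv z s) s :=
    ((hsq s).hasDerivAt).prodMk (((hsq s).hasDerivAt).mul ((hzd s).hasDerivAt))
  have hd : deriv (gammaHat z sq) s = (deriv sq s, deriv sq s * z s + sq s * deriv z s) :=
    h1.deriv
  have hkey : omegaC (gammaHat z sq s) (deriv (gammaHat z sq) s) = Complex.I := by
    rw [hd]
    simp only [omegaC, gammaHat]
    have : sq s * (deriv sq s * z s + sq s * deriv z s) - sq s * z s * deriv sq s
        = (sq s)^2 * deriv z s := by ring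
    rw [this, hsqT s]
    have habs : starRingEnd ℂ (deriv z s) * deriv z s = 1 := by
      rw [mul_comm, Complex.mul_conj]
      norm_cast
      rw [← Complex.sq_norm, hunit s]; norm_num
    rw [habs, mul_one]
  exact ⟨hkey, by rw [hkey]; simp⟩
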